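/- Let G be a group and H ◁ G of finite index. For an endomorphism φ of the forgetful functor on C and g ∈ G define φ_g = Inf_H^G(r_H^G(δ̂_{g⁻¹} φ)) where δ̂_g(π) = π(g). Then φ decomposes as φ = Σ_{g ∈ G/H} δ̂_g φ_g; in particular for every induced representation Π = Ind_H^G π, one has φ(Π) = Σ_{s,t ∈ G/H} p_{ts⁻¹} φ(Π) p_t summed appropriately, which equals φ(Π) since Σ_g p_g = Id. -/

import Mathlib

noncomputable section

open scoped TensorProduct DirectSum

universe u

section Defs

variable {G : Type u} [Group G]

/-- The submodule of equivariant linear maps between two representations. -/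
def equivHom {M : Type*} [Monoid M] {V₁ V₂ : Type*}
    [AddCommGroup V₁] [Module ℂ V₁] [AddCommGroup V₂] [Module ℂ V₂]
    (ρ₁ : Representation ℂ M V₁) (ρ₂ : Representation ℂ M V₂) :
    Submodule ℂ (V₁ →ₗ[ℂ] V₂) where
  carrier := {f | ∀ (m : M) (v : V₁), f (ρ₁ m v) = ρ₂ m (f v)}
  add_mem' := by intro a b ha hb m v; simp_all
  zero_mem' := by intro m v; simp
  smul_mem' := by intro c f hf m v; simp_all

instance equivHom.instAddCommGroup {M : Type*} [Monoid M] {V₁ V₂ : Type*}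
    [AddCommGroup V₁] [Module ℂ V₁] [AddCommGroup V₂] [Module ℂ V₂]
    (ρ₁ : Representation ℂ M V₁) (ρ₂ : Representation ℂ M V₂) :
    AddCommGroup ↥(equivHom ρ₁ ρ₂) :=
  Submodule.addCommGroup _

instance equivHom.instModule {M : Type*} [Monoid M] {V₁ V₂ : Type*}
    [AddCommGroup V₁] [Module ℂ V₁] [AddCommGroup V₂] [Module ℂ V₂]
    (ρ₁ : Representation ℂ M V₁) (ρ₂ : Representation ℂ M V₂) :
    Module ℂ ↥(equivHom ρ₁ ρ₂) :=
  Submodule.module _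

/-- Twist of a representation by a `ℂˣ`-valued character. -/
def twist {V : Type*} [AddCommGroup V] [Module ℂ V]
    (ρ : Representation ℂ G V) (χ : G →* ℂˣ) : Representation ℂ G V where
  toFun g := (χ g : ℂ) • ρ g
  map_one' := by simp
  map_mul' g₁ g₂ := by
    ext v
    simp [Module.End.mul_apply, LinearMap.smul_apply, map_mul, smul_smul,
      map_smul, mul_comm, mul_left_comm]

@[simp] lemma twist_apply {V : Type*} [AddCommGroup V] [Module ℂ V]
    (ρ : Representation ℂ G V) (χ : G →* ℂˣ) (g : G) (v : V) :
    twist ρ χ g v = (χ g : ℂ) • ρ g v := rfl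

/-- Characters of `G` trivial on `H`, i.e. characters of `G/H`. -/
def TrivOn (H : Subgroup G) : Type u := {χ : G →* ℂˣ // ∀ h ∈ H, χ h = 1}

/-- Irreducibility of a representation. -/
def IsIrreducibleRep {M : Type*} [Monoid M] {V : Type*} [AddCommGroup V] [Module ℂ V]
    (ρ : Representation ℂ M V) : Prop :=
  (∃ v : V, v ≠ 0) ∧
    ∀ W : Submodule ℂ V, (∀ (m : M) (v : V), v ∈ W → ρ m v ∈ W) → W = ⊥ ∨ W = ⊤

/-- Equivalence (isomorphism) of representations. -/
def RepEquiv {M : Type*} [Monoid M] {V₁ V₂ : Type*}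
    [AddCommGroup V₁] [Module ℂ V₁] [AddCommGroup V₂] [Module ℂ V₂]
    (ρ₁ : Representation ℂ M V₁) (ρ₂ : Representation ℂ M V₂) : Prop :=
  ∃ e : V₁ ≃ₗ[ℂ] V₂, ∀ (m : M) (v : V₁), e (ρ₁ m v) = ρ₂ m (e v)

/-- Restriction of a representation of `G` to a subgroup `H`. -/
def resR (H : Subgroup G) {V : Type*} [AddCommGroup V] [Module ℂ V]
    (ρ : Representation ℂ G V) : Representation ℂ H V := ρ.comp H.subtype

@[simp] lemma resR_apply (H : Subgroup G) {V : Type*} [AddCommGroup V] [Module ℂ V]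
    (ρ : Representation ℂ G V) (h : H) : resR H ρ h = ρ ↑h := rfl

end Defs
section Ind

variable {G : Type u} [Group G] (H : Subgroup G)
variable {V : Type u} [AddCommGroup V] [Module ℂ V]

/-- The space of the induced representation: functions `w : G → V` with
`w (h * g) = ρ h (w g)` for `h ∈ H`. -/
def IndSpace (ρ : Representation ℂ H V) : Submodule ℂ (G → V) where
  carrier := {w | ∀ (h : H) (g : G), w (↑h * g) = ρ h (w g)}
  add_mem' := by intro a b ha hb h g; simp_all
  zero_mem' := by intro h g; simp
  smul_mem' := by intro c a ha h g; simp_all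

/-- The induced representation `Ind_H^G ρ`, acting by right translation. -/
def indRep (ρ : Representation ℂ H V) : Representation ℂ G ↥(IndSpace H ρ) where
  toFun g :=
    { toFun := fun w => ⟨fun x => (w : G → V) (x * g), by
        intro h x
        have := w.2 h (x * g)
        simpa [mul_assoc] using this⟩
      map_add' := by intro a b; apply Subtype.ext; funext x; simp
      map_smul' := by intro c a; apply Subtype.ext; funext x; simp }
  map_one' := by
    apply LinearMap.ext; intro w; apply Subtype.ext; funext x; simp
  map_mul' := by
    intro g₁ g₂
    apply LinearMap.ext; intro w; apply Subtype.ext; funext x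
    simp [Module.End.mul_apply, mul_assoc]

@[simp] lemma indRep_apply (ρ : Representation ℂ H V) (g : G) (w : ↥(IndSpace H ρ)) (x : G) :
    ((indRep H ρ g w : ↥(IndSpace H ρ)) : G → V) x = (w : G → V) (x * g) := rfl

/-- Evaluation at `g` of functions in the induced representation. -/
def evalAt (ρ : Representation ℂ H V) (g : G) : ↥(IndSpace H ρ) →ₗ[ℂ] V where
  toFun w := (w : G → V) g
  map_add' := by intro a b; simp
  map_smul' := by intro c a; simp

@[simp] lemma evalAt_apply (ρ : Representation ℂ H V) (g : G) (w : ↥(IndSpace H ρ)) :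
    evalAt H ρ g w = (w : G → V) g := rfl

/-- Extension by zero: the section `e_g^*` of `evalAt`, supported on the coset `H g`. -/
def extAt [DecidablePred (· ∈ H)] (ρ : Representation ℂ H V) (g : G) :
    V →ₗ[ℂ] ↥(IndSpace H ρ) where
  toFun v := ⟨fun x => if hx : x * g⁻¹ ∈ H then ρ ⟨x * g⁻¹, hx⟩ v else 0, by
    intro h x
    dsimp only
    by_cases hx : x * g⁻¹ ∈ H
    · have hx' : (↑h * x) * g⁻¹ ∈ H := by
        have e : (↑h * x) * g⁻¹ = ↑h * (x * g⁻¹) := by group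
        rw [e]; exact H.mul_mem h.2 hx
      rw [dif_pos hx', dif_pos hx]
      have e2 : (⟨(↑h * x) * g⁻¹, hx'⟩ : H) = h * ⟨x * g⁻¹, hx⟩ := by
        apply Subtype.ext; simp [mul_assoc]
      rw [e2, map_mul]
      rfl
    · have hx' : ¬ ((↑h * x) * g⁻¹ ∈ H) := by
        intro hc
        apply hx
        have e : x * g⁻¹ = (↑h)⁻¹ * ((↑h * x) * g⁻¹) := by group
        rw [e]; exact H.mul_mem (H.inv_mem h.2) hc
      rw [dif_neg hx', dif_neg hx, map_zero]⟩
  map_add' := by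
    intro a b; apply Subtype.ext; funext x
    by_cases hx : x * g⁻¹ ∈ H <;> simp [hx]
  map_smul' := by
    intro c a; apply Subtype.ext; funext x
    by_cases hx : x * g⁻¹ ∈ H <;> simp [hx]

/-- The projector `p_g = e_g^* ∘ e_g` onto functions supported on `H g`. -/
def projAt [DecidablePred (· ∈ H)] (ρ : Representation ℂ H V) (g : G) :
    ↥(IndSpace H ρ) →ₗ[ℂ] ↥(IndSpace H ρ) :=
  extAt H ρ g ∘ₗ evalAt H ρ g

/-- Functoriality of induction on `H`-equivariant maps. -/
def indMap {V₁ V₂ : Type u} [AddCommGroup V₁] [Module ℂ V₁] [AddCommGroup V₂] [Module ℂ V₂]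
    (ρ₁ : Representation ℂ H V₁) (ρ₂ : Representation ℂ H V₂)
    (α : V₁ →ₗ[ℂ] V₂) (hα : ∀ (h : H) (v : V₁), α (ρ₁ h v) = ρ₂ h (α v)) :
    ↥(IndSpace H ρ₁) →ₗ[ℂ] ↥(IndSpace H ρ₂) where
  toFun w := ⟨fun x => α ((w : G → V₁) x), by
    intro h x
    dsimp only
    rw [w.2 h x, hα]⟩
  map_add' := by intro a b; apply Subtype.ext; funext x; simp
  map_smul' := by intro c a; apply Subtype.ext; funext x; simp

/-- Conjugate representation `π^g`, given by `h ↦ π (g⁻¹ h g)`. -/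
def conjRep [hN : H.Normal] (ρ : Representation ℂ H V) (g : G) : Representation ℂ H V :=
  ρ.comp
    { toFun := fun h => ⟨g⁻¹ * ↑h * g, by simpa using hN.conj_mem ↑h h.2 g⁻¹⟩
      map_one' := by apply Subtype.ext; simp
      map_mul' := by
        intro a b; apply Subtype.ext
        show g⁻¹ * ↑(a * b) * g = (g⁻¹ * ↑a * g) * (g⁻¹ * ↑b * g)
        rw [Subgroup.coe_mul]; group }

@[simp] lemma conjRep_apply [H.Normal] (ρ : Representation ℂ H V) (g : G) (h : H) (v : V) :
    conjRep H ρ g h v = ρ ⟨g⁻¹ * ↑h * g, by simpa using ‹H.Normal›.conj_mem ↑h h.2 g⁻¹⟩ v := rfl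

attribute [irreducible] indRep

end Ind
section Bundled

/-- A bundled (complex, linear) representation of a group `M`. -/
structure RepOn (M : Type u) [Group M] : Type (u + 1) where
  V : Type u
  [acg : AddCommGroup V]
  [mod : Module ℂ V]
  ρ : Representation ℂ M V

attribute [instance] RepOn.acg RepOn.mod

variable {G : Type u} [Group G]

/-- The bundled induced representation. -/
def indRepOn (H : Subgroup G) (σ : RepOn ↥H) : RepOn G :=
  { V := ↥(IndSpace H σ.ρ), ρ := indRep H σ.ρ }

/-- The bundled restriction to a subgroup. -/
def resRepOn (H : Subgroup G) (P : RepOn G) : RepOn ↥H :=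
  { V := P.V, ρ := resR H P.ρ }

/-- The bundled twist by a character trivial on `H`. -/
def twistRepOn {H : Subgroup G} (P : RepOn G) (χ : TrivOn H) : RepOn G :=
  { V := P.V, ρ := twist P.ρ χ.1 }

/-- A family of endomorphisms (one for each bundled representation) commuting with all
intertwiners between members of `C`: an endomorphism of the forgetful functor on `C`. -/
def Commutes {M : Type u} [Group M] (C : Set (RepOn M))
    (φ : ∀ π : RepOn M, π.V →ₗ[ℂ] π.V) : Prop :=
  ∀ π₁ ∈ C, ∀ π₂ ∈ C, ∀ α : π₁.V →ₗ[ℂ] π₂.V,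
    (∀ m : M, α ∘ₗ π₁.ρ m = π₂.ρ m ∘ₗ α) → α ∘ₗ φ π₁ = φ π₂ ∘ₗ α

/-- Commutation with all `H`-intertwiners between members of `C` (support in `H`). -/
def HCommutes (H : Subgroup G) (C : Set (RepOn G))
    (φ : ∀ π : RepOn G, π.V →ₗ[ℂ] π.V) : Prop :=
  ∀ π₁ ∈ C, ∀ π₂ ∈ C, ∀ α : π₁.V →ₗ[ℂ] π₂.V,
    (∀ h : H, α ∘ₗ π₁.ρ ↑h = π₂.ρ ↑h ∘ₗ α) → α ∘ₗ φ π₁ = φ π₂ ∘ₗ α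

/-- The direct sum of a family of bundled representations. -/
def dsumRepOn {M : Type u} [Group M] {ι : Type u} [DecidableEq ι] (f : ι → RepOn M) :
    RepOn M where
  V := ⨁ i, (f i).V
  ρ :=
    { toFun := fun m => DFinsupp.mapRange.linearMap (fun i => (f i).ρ m)
      map_one' := by
        have : (fun i => (f i).ρ (1 : M)) = fun i => (LinearMap.id : (f i).V →ₗ[ℂ] (f i).V) := by
          funext i; rw [map_one]; rfl
        try dsimp only
        rw [this, DFinsupp.mapRange.linearMap_id]
        rfl
      map_mul' := by
        intro m₁ m₂
        have : (fun i => (f i).ρ (m₁ * m₂)) =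
            fun i => ((f i).ρ m₁) ∘ₗ ((f i).ρ m₂) := by
          funext i; rw [map_mul]; rfl
        try dsimp only
        rw [this, DFinsupp.mapRange.linearMap_comp]
        rfl }

/-- Closure of a class of representations under subobjects, quotients and direct sums. -/
def ClosedRep {M : Type u} [Group M] (C : Set (RepOn M)) : Prop :=
  (∀ P ∈ C, ∀ σ : RepOn M, (∃ f : σ.V →ₗ[ℂ] P.V, Function.Injective f ∧
      ∀ (m : M) (v : σ.V), f (σ.ρ m v) = P.ρ m (f v)) → σ ∈ C) ∧
  (∀ P ∈ C, ∀ σ : RepOn M, (∃ f : P.V →ₗ[ℂ] σ.V, Function.Surjective f ∧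
      ∀ (m : M) (v : P.V), f (P.ρ m v) = σ.ρ m (f v)) → σ ∈ C) ∧
  (∀ (ι : Type u) (_ : DecidableEq ι) (f : ι → RepOn M),
      (∀ i, f i ∈ C) → dsumRepOn f ∈ C)

/-- The Fourier transform of a finitely supported function at a representation. -/
def fourierT {M : Type u} [Group M] (f : M →₀ ℂ) {V : Type*} [AddCommGroup V] [Module ℂ V]
    (ρ : Representation ℂ M V) : V →ₗ[ℂ] V :=
  f.sum fun g c => c • (ρ g : V →ₗ[ℂ] V)

end Bundled

section Aux17

variable {G : Type u} [Group G] (H : Subgroup G)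
variable {V : Type u} [AddCommGroup V] [Module ℂ V]

lemma aux_mem_iff [hN : H.Normal] (x g : G) : x * g⁻¹ ∈ H ↔ x⁻¹ * g ∈ H := by
  constructor
  · intro h
    have h2 := hN.conj_mem _ h x⁻¹
    have e : x⁻¹ * (x * g⁻¹) * x⁻¹⁻¹ = g⁻¹ * x := by group
    rw [e] at h2
    simpa using H.inv_mem h2
  · intro h
    have h2 := hN.conj_mem _ (H.inv_mem h) x
    have e : x * (x⁻¹ * g)⁻¹ * x⁻¹ = x * g⁻¹ := by group
    rwa [e] at h2

lemma aux_mem_iff_mk [H.Normal] (x g : G) :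
    x * g⁻¹ ∈ H ↔ (QuotientGroup.mk x : G ⧸ H) = QuotientGroup.mk g := by
  rw [QuotientGroup.eq]
  exact aux_mem_iff H x g

lemma projAt_coset [DecidablePred (· ∈ H)] (ρ : Representation ℂ ↥H V)
    {g g' : G} (hk : g' * g⁻¹ ∈ H) :
    projAt H ρ g' = projAt H ρ g := by
  apply LinearMap.ext; intro w
  apply Subtype.ext
  funext x
  show (extAt H ρ g' ((w : G → V) g') : G → V) x = (extAt H ρ g ((w : G → V) g) : G → V) x
  have hcond : x * g'⁻¹ ∈ H ↔ x * g⁻¹ ∈ H := by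
    constructor
    · intro h
      have h2 := H.mul_mem h hk
      have e : x * g'⁻¹ * (g' * g⁻¹) = x * g⁻¹ := by group
      rwa [e] at h2
    · intro h
      have h2 := H.mul_mem h (H.inv_mem hk)
      have e : x * g⁻¹ * (g' * g⁻¹)⁻¹ = x * g'⁻¹ := by group
      rwa [e] at h2
  dsimp [extAt]
  by_cases hx : x * g⁻¹ ∈ H
  · rw [dif_pos (hcond.mpr hx), dif_pos hx]
    have hw := w.2 ⟨g' * g⁻¹, hk⟩ g
    rw [show ((⟨g' * g⁻¹, hk⟩ : H) : G) * g = g' by group] at hw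
    rw [hw]
    have e2 : (⟨x * g'⁻¹, hcond.mpr hx⟩ : H) * ⟨g' * g⁻¹, hk⟩ = ⟨x * g⁻¹, hx⟩ := by
      apply Subtype.ext
      show x * g'⁻¹ * (g' * g⁻¹) = x * g⁻¹
      group
    rw [← e2, map_mul, Module.End.mul_apply]
  · rw [dif_neg (fun h => hx (hcond.mp h)), dif_neg hx]

lemma extAt_apply' [DecidablePred (· ∈ H)] (ρ : Representation ℂ H V) (g : G) (v : V) (x : G) :
    ((extAt H ρ g v : ↥(IndSpace H ρ)) : G → V) x
      = if hx : x * g⁻¹ ∈ H then ρ ⟨x * g⁻¹, hx⟩ v else 0 := rfl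

lemma sum_projAt [H.Normal] [Fintype (G ⧸ H)] [DecidablePred (· ∈ H)]
    (ρ : Representation ℂ ↥H V) (R : G ⧸ H → G) (hR : ∀ x, QuotientGroup.mk (R x) = x) :
    ∑ z : G ⧸ H, projAt H ρ (R z) = LinearMap.id := by
  apply LinearMap.ext; intro w
  apply Subtype.ext
  funext x
  rw [LinearMap.sum_apply]
  rw [AddSubmonoidClass.coe_finset_sum, Finset.sum_apply]
  rw [Finset.sum_eq_single (QuotientGroup.mk x : G ⧸ H)]
  · have hx : x * (R (QuotientGroup.mk x))⁻¹ ∈ H := by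
      rw [aux_mem_iff_mk, hR]
    show (extAt H ρ _ ((w : G → V) _) : G → V) x = (w : G → V) x
    dsimp [extAt]
    rw [dif_pos hx]
    have hw := w.2 ⟨x * (R (QuotientGroup.mk x))⁻¹, hx⟩ (R (QuotientGroup.mk x))
    rw [show ((⟨x * (R (QuotientGroup.mk x))⁻¹, hx⟩ : H) : G) * R (QuotientGroup.mk x) = x
      by group] at hw
    exact hw.symm
  · intro z _ hz
    show (extAt H ρ _ ((w : G → V) _) : G → V) x = 0
    dsimp [extAt]
    rw [dif_neg]
    intro h
    exact hz (((aux_mem_iff_mk H x (R z)).mp h).trans (hR z)).symm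
  · intro h
    exact absurd (Finset.mem_univ _) h

/-- The canonical `G`-equivariant embedding `V → Ind_H^G (res_H ρ)`, `v ↦ (x ↦ ρ x v)`. -/
def canMap (ρ : Representation ℂ G V) : V →ₗ[ℂ] ↥(IndSpace H (resR H ρ)) where
  toFun v := ⟨fun x => ρ x v, by
    intro h x
    show ρ (↑h * x) v = resR H ρ h (ρ x v)
    rw [map_mul]
    rfl⟩
  map_add' a b := by apply Subtype.ext; funext x; simp
  map_smul' c a := by apply Subtype.ext; funext x; simp

@[simp] lemma canMap_apply (ρ : Representation ℂ G V) (v : V) (x : G) :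
    ((canMap H ρ v : ↥(IndSpace H (resR H ρ))) : G → V) x = ρ x v := rfl

lemma canMap_equiv (ρ : Representation ℂ G V) (g : G) :
    canMap H ρ ∘ₗ ρ g = indRep H (resR H ρ) g ∘ₗ canMap H ρ := by
  apply LinearMap.ext; intro v
  apply Subtype.ext
  funext x
  show ρ x (ρ g v) = ((indRep H (resR H ρ) g (canMap H ρ v) : ↥(IndSpace H (resR H ρ))) : G → V) x
  rw [indRep_apply, canMap_apply, ← Module.End.mul_apply, ← map_mul]

lemma canMap_decomp [H.Normal] [Fintype (G ⧸ H)] [DecidablePred (· ∈ H)]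
    (ρ : Representation ℂ G V) (R : G ⧸ H → G) (hR : ∀ x, QuotientGroup.mk (R x) = x) (v : V) :
    canMap H ρ v =
      ∑ z : G ⧸ H, indRep H (resR H ρ) (R z)⁻¹ (extAt H (resR H ρ) 1 (ρ (R z) v)) := by
  apply Subtype.ext
  funext x
  rw [AddSubmonoidClass.coe_finset_sum, Finset.sum_apply, canMap_apply]
  rw [Finset.sum_eq_single (QuotientGroup.mk x : G ⧸ H)]
  · have hx : x * (R (QuotientGroup.mk x))⁻¹ * 1⁻¹ ∈ H := by
      rw [inv_one, mul_one, aux_mem_iff_mk, hR]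
    symm
    rw [indRep_apply]
    show (extAt H (resR H ρ) 1 (ρ (R (QuotientGroup.mk x)) v) : G → V) _ = ρ x v
    rw [extAt_apply']
    rw [dif_pos hx]
    show ρ (x * (R (QuotientGroup.mk x))⁻¹ * 1⁻¹) (ρ (R (QuotientGroup.mk x)) v) = ρ x v
    rw [← Module.End.mul_apply, ← map_mul]
    congr 1
    group
  · intro z _ hz
    rw [indRep_apply]
    show (extAt H (resR H ρ) 1 (ρ (R z) v) : G → V) _ = 0
    rw [extAt_apply']
    rw [dif_neg]
    intro h
    rw [inv_one, mul_one] at h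
    exact hz (((aux_mem_iff_mk H x (R z)).mp h).trans (hR z)).symm
  · intro h
    exact absurd (Finset.mem_univ _) h

/-- The intertwiner `β_g : Ind_H^G (res ρ) → Ind_H^G (res ρ)`, `(β_g w)(x) = ρ(g)⁻¹ w(gx)`. -/
def leftTwist [hN : H.Normal] (ρ : Representation ℂ G V) (g : G) :
    ↥(IndSpace H (resR H ρ)) →ₗ[ℂ] ↥(IndSpace H (resR H ρ)) where
  toFun w := ⟨fun x => ρ g⁻¹ ((w : G → V) (g * x)), by
    intro h x
    dsimp only
    have hmem : g * ↑h * g⁻¹ ∈ H := hN.conj_mem _ h.2 g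
    have e : g * (↑h * x) = ((⟨g * ↑h * g⁻¹, hmem⟩ : H) : G) * (g * x) := by
      show g * (↑h * x) = (g * ↑h * g⁻¹) * (g * x)
      group
    rw [e, w.2 ⟨g * ↑h * g⁻¹, hmem⟩ (g * x)]
    show ρ g⁻¹ (ρ (g * ↑h * g⁻¹) ((w : G → V) (g * x))) =
      resR H ρ h (ρ g⁻¹ ((w : G → V) (g * x)))
    rw [← Module.End.mul_apply, ← map_mul]
    show ρ (g⁻¹ * (g * ↑h * g⁻¹)) _ = ρ ↑h (ρ g⁻¹ _)
    rw [← Module.End.mul_apply, ← map_mul]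
    congr 2
    group⟩
  map_add' a b := by apply Subtype.ext; funext x; simp
  map_smul' c a := by apply Subtype.ext; funext x; simp

@[simp] lemma leftTwist_apply [H.Normal] (ρ : Representation ℂ G V) (g : G)
    (w : ↥(IndSpace H (resR H ρ))) (x : G) :
    ((leftTwist H ρ g w : ↥(IndSpace H (resR H ρ))) : G → V) x
      = ρ g⁻¹ ((w : G → V) (g * x)) := rfl

lemma leftTwist_equiv [H.Normal] (ρ : Representation ℂ G V) (g a : G) :
    leftTwist H ρ g ∘ₗ indRep H (resR H ρ) a = indRep H (resR H ρ) a ∘ₗ leftTwist H ρ g := by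
  apply LinearMap.ext; intro w
  apply Subtype.ext
  funext x
  show ((leftTwist H ρ g (indRep H (resR H ρ) a w) : ↥(IndSpace H (resR H ρ))) : G → V) x
    = ((indRep H (resR H ρ) a (leftTwist H ρ g w) : ↥(IndSpace H (resR H ρ))) : G → V) x
  rw [leftTwist_apply, indRep_apply, indRep_apply, leftTwist_apply, mul_assoc]

lemma leftTwist_ext [H.Normal] [DecidablePred (· ∈ H)] (ρ : Representation ℂ G V) (g : G) :
    leftTwist H ρ g⁻¹ ∘ₗ extAt H (resR H ρ) 1
      = indRep H (resR H ρ) g⁻¹ ∘ₗ extAt H (resR H ρ) 1 ∘ₗ ρ g := by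
  apply LinearMap.ext; intro v
  apply Subtype.ext
  funext x
  show ((leftTwist H ρ g⁻¹ (extAt H (resR H ρ) 1 v) : ↥(IndSpace H (resR H ρ))) : G → V) x
    = ((indRep H (resR H ρ) g⁻¹ (extAt H (resR H ρ) 1 (ρ g v)) :
        ↥(IndSpace H (resR H ρ))) : G → V) x
  rw [leftTwist_apply, indRep_apply]
  show ρ g⁻¹⁻¹ ((extAt H (resR H ρ) 1 v : G → V) (g⁻¹ * x))
    = (extAt H (resR H ρ) 1 (ρ g v) : G → V) (x * g⁻¹)
  have hcond : g⁻¹ * x * 1⁻¹ ∈ H ↔ x * g⁻¹ * 1⁻¹ ∈ H := by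
    rw [inv_one, mul_one, mul_one]
    constructor
    · intro h
      have h2 := (aux_mem_iff H g⁻¹ x⁻¹).mp (by simpa using h)
      simpa [mul_inv_rev] using H.inv_mem h2
    · intro h
      simpa [mul_inv_rev] using H.inv_mem ((aux_mem_iff H x g).mp h)
  rw [extAt_apply', extAt_apply']
  by_cases hx : x * g⁻¹ * 1⁻¹ ∈ H
  · rw [dif_pos (hcond.mpr hx), dif_pos hx]
    show ρ g⁻¹⁻¹ (ρ (g⁻¹ * x * 1⁻¹) v) = ρ (x * g⁻¹ * 1⁻¹) (ρ g v)
    rw [← Module.End.mul_apply, ← map_mul, ← Module.End.mul_apply, ← map_mul]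
    congr 2
    group
  · rw [dif_neg (fun h => hx (hcond.mp h)), dif_neg hx, map_zero]

lemma leftTwist_eval [H.Normal] (ρ : Representation ℂ G V) (g : G) :
    evalAt H (resR H ρ) 1 ∘ₗ leftTwist H ρ g⁻¹
      = ρ g ∘ₗ evalAt H (resR H ρ) 1 ∘ₗ indRep H (resR H ρ) g⁻¹ := by
  apply LinearMap.ext; intro w
  show evalAt H (resR H ρ) 1 (leftTwist H ρ g⁻¹ w)
    = ρ g (evalAt H (resR H ρ) 1 (indRep H (resR H ρ) g⁻¹ w))
  rw [evalAt_apply, evalAt_apply, leftTwist_apply, indRep_apply, inv_inv, mul_one, one_mul]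

lemma lmap_sum_comp {A B D : Type*} [AddCommGroup A] [Module ℂ A] [AddCommGroup B] [Module ℂ B]
    [AddCommGroup D] [Module ℂ D] {ι : Type*} (s : Finset ι)
    (f : ι → (B →ₗ[ℂ] D)) (g : A →ₗ[ℂ] B) :
    (∑ i ∈ s, f i) ∘ₗ g = ∑ i ∈ s, f i ∘ₗ g := by
  apply LinearMap.ext; intro b
  simp [LinearMap.sum_apply]

lemma lmap_comp_sum {A B D : Type*} [AddCommGroup A] [Module ℂ A] [AddCommGroup B] [Module ℂ B]
    [AddCommGroup D] [Module ℂ D] {ι : Type*} (s : Finset ι)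
    (f : ι → (A →ₗ[ℂ] B)) (g : B →ₗ[ℂ] D) :
    g ∘ₗ (∑ i ∈ s, f i) = ∑ i ∈ s, g ∘ₗ f i := by
  apply LinearMap.ext; intro b
  simp [LinearMap.sum_apply, map_sum]

end Aux17

set_option synthInstance.maxHeartbeats 1000000 in
set_option maxHeartbeats 1000000 in
/-- Let `H ◁ G` be of finite index.  For an endomorphism `φ` of the
forgetful functor on `C` and `g ∈ G`, set `φ_g = Inf_H^G (r_H^G (δ̂_{g⁻¹} φ))`, i.e.
`φ_g(P) = e₁ ∘ (Ind_H^G (P|_H))(g⁻¹) ∘ φ(Ind_H^G (P|_H)) ∘ e₁^*`.  Then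
`φ = ∑_{g ∈ G/H} δ̂_g φ_g` on `C` (where `C` is generated by the representations induced
from restrictions); in particular on any induced representation `Π = Ind_H^G σ` one has
`φ(Π) = ∑_{s,t ∈ G/H} p_{t s⁻¹} ∘ φ(Π) ∘ p_t`, which equals `φ(Π)` since `∑_g p_g = Id`. -/
theorem statement17 {G : Type u} [Group G] (H : Subgroup G) [H.Normal] [Fintype (G ⧸ H)]
    [DecidablePred (· ∈ H)]
    (R : G ⧸ H → G) (hR : ∀ x, QuotientGroup.mk (R x) = x)
    (C : Set (RepOn G)) (hC : ClosedRep C)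
    (hCInd : ∀ P ∈ C, indRepOn H (resRepOn H P) ∈ C)
    (hgen : ∀ C' : Set (RepOn G),
      (∀ P ∈ C, indRepOn H (resRepOn H P) ∈ C') → ClosedRep C' → C ⊆ C')
    (φ : ∀ P : RepOn G, P.V →ₗ[ℂ] P.V) (hφ : Commutes C φ) :
    (∀ P ∈ C,
      φ P = ∑ x : G ⧸ H,
        P.ρ (R x) ∘ₗ
          (evalAt H (resR H P.ρ) 1 ∘ₗ indRep H (resR H P.ρ) (R x)⁻¹ ∘ₗ
            φ (indRepOn H (resRepOn H P)) ∘ₗ extAt H (resR H P.ρ) 1)) ∧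
    (∀ σ : RepOn ↥H, indRepOn H σ ∈ C →
      φ (indRepOn H σ) =
        ∑ x : G ⧸ H, ∑ y : G ⧸ H,
          projAt H σ.ρ (R y * (R x)⁻¹) ∘ₗ φ (indRepOn H σ) ∘ₗ projAt H σ.ρ (R y)) := by
  constructor
  · intro P hP
    have hPi : indRepOn H (resRepOn H P) ∈ C := hCInd P hP
    have hcan : canMap H P.ρ ∘ₗ φ P = φ (indRepOn H (resRepOn H P)) ∘ₗ canMap H P.ρ := by
      apply hφ P hP _ hPi
      intro g
      exact canMap_equiv H P.ρ g
    have hβ : ∀ g : G, leftTwist H P.ρ g ∘ₗ φ (indRepOn H (resRepOn H P))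
        = φ (indRepOn H (resRepOn H P)) ∘ₗ leftTwist H P.ρ g := by
      intro g
      apply hφ _ hPi _ hPi
      intro a
      exact leftTwist_equiv H P.ρ g a
    apply LinearMap.ext; intro v
    have h0 : ∀ u : P.V, evalAt H (resR H P.ρ) 1 (canMap H P.ρ u) = u := by
      intro u
      show P.ρ 1 u = u
      rw [map_one]
      rfl
    have h1 : φ P v
        = evalAt H (resR H P.ρ) 1 (φ (indRepOn H (resRepOn H P)) (canMap H P.ρ v)) := by
      have h2 : canMap H P.ρ (φ P v)
          = φ (indRepOn H (resRepOn H P)) (canMap H P.ρ v) := by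
        exact congrArg (fun f : P.V →ₗ[ℂ] ↥(IndSpace H (resR H P.ρ)) => f v) hcan
      rw [← h2, h0]
    rw [h1, canMap_decomp H P.ρ R hR v]
    erw [map_sum, map_sum]
    rw [LinearMap.sum_apply]
    apply Finset.sum_congr rfl
    intro z _
    simp only [LinearMap.comp_apply]
    have r1 := congrArg
      (fun f : P.V →ₗ[ℂ] ↥(IndSpace H (resR H P.ρ)) => f v) (leftTwist_ext H P.ρ (R z))
    simp only [LinearMap.comp_apply] at r1
    rw [← r1]
    have r2 : leftTwist H P.ρ (R z)⁻¹
          (φ (indRepOn H (resRepOn H P)) (extAt H (resR H P.ρ) 1 v))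
        = φ (indRepOn H (resRepOn H P)) (leftTwist H P.ρ (R z)⁻¹ (extAt H (resR H P.ρ) 1 v)) := by
      exact congrArg
        (fun f : ↥(IndSpace H (resR H P.ρ)) →ₗ[ℂ] ↥(IndSpace H (resR H P.ρ)) =>
          f (extAt H (resR H P.ρ) 1 v)) (hβ (R z)⁻¹)
    rw [← r2]
    have r3 : evalAt H (resR H P.ρ) 1
          (leftTwist H P.ρ (R z)⁻¹ (φ (indRepOn H (resRepOn H P)) (extAt H (resR H P.ρ) 1 v)))
        = P.ρ (R z) (evalAt H (resR H P.ρ) 1 (indRep H (resR H P.ρ) (R z)⁻¹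
            (φ (indRepOn H (resRepOn H P)) (extAt H (resR H P.ρ) 1 v)))) := by
      exact congrArg
        (fun f : ↥(IndSpace H (resR H P.ρ)) →ₗ[ℂ] P.V =>
          f (φ (indRepOn H (resRepOn H P)) (extAt H (resR H P.ρ) 1 v)))
        (leftTwist_eval H P.ρ (R z))
    rw [r3]
    rfl
  · intro σ hσ
    have hsum : ∀ y : G ⧸ H, ∑ x : G ⧸ H, projAt H σ.ρ (R y * (R x)⁻¹) = LinearMap.id := by
      intro y
      have hc : ∀ x : G ⧸ H,
          projAt H σ.ρ (R y * (R x)⁻¹) = projAt H σ.ρ (R (y * x⁻¹)) := by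
        intro x
        apply projAt_coset
        rw [aux_mem_iff_mk, hR, QuotientGroup.mk_mul, QuotientGroup.mk_inv, hR, hR]
      calc ∑ x : G ⧸ H, projAt H σ.ρ (R y * (R x)⁻¹)
          = ∑ x : G ⧸ H, projAt H σ.ρ (R (y * x⁻¹)) := by
            exact Finset.sum_congr rfl fun x _ => hc x
        _ = ∑ z : G ⧸ H, projAt H σ.ρ (R z) := by
            apply Fintype.sum_equiv ((Equiv.inv (G ⧸ H)).trans (Equiv.mulLeft y))
            intro x
            rfl
        _ = LinearMap.id := sum_projAt H σ.ρ R hR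
    rw [Finset.sum_comm]
    have step : ∀ y : G ⧸ H,
        ∑ x : G ⧸ H, projAt H σ.ρ (R y * (R x)⁻¹) ∘ₗ
          (φ (indRepOn H σ) ∘ₗ projAt H σ.ρ (R y))
        = φ (indRepOn H σ) ∘ₗ projAt H σ.ρ (R y) := by
      intro y
      rw [← lmap_sum_comp, hsum y, LinearMap.id_comp]
      rfl
    calc φ (indRepOn H σ)
        = φ (indRepOn H σ) ∘ₗ LinearMap.id := (LinearMap.comp_id _).symm
      _ = φ (indRepOn H σ) ∘ₗ
            (∑ y : G ⧸ H, projAt H σ.ρ (R y) : (indRepOn H σ).V →ₗ[ℂ] (indRepOn H σ).V) := by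
            rw [show (∑ y : G ⧸ H, projAt H σ.ρ (R y) : (indRepOn H σ).V →ₗ[ℂ] (indRepOn H σ).V) = LinearMap.id from
              sum_projAt H σ.ρ R hR]
      _ = ∑ y : G ⧸ H, (φ (indRepOn H σ) ∘ₗ projAt H σ.ρ (R y) : (indRepOn H σ).V →ₗ[ℂ] (indRepOn H σ).V) := by
            exact lmap_comp_sum _ _ _
      _ = ∑ y : G ⧸ H, ∑ x : G ⧸ H,
            (projAt H σ.ρ (R y * (R x)⁻¹) ∘ₗ φ (indRepOn H σ) ∘ₗ projAt H σ.ρ (R y) : (indRepOn H σ).V →ₗ[ℂ] (indRepOn H σ).V) := by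
            exact Finset.sum_congr rfl fun y _ => (step y).symm
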